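/- arXiv:2108.07472 — 3 statements merged into one kernel-verified Lean document; each statement's English description precedes it below -/
import Mathlib

section
/- Agnostic PAC learnability of Nash equilibrium: Let H be a nonempty set of measurable NE approximators, D a probability measure on U, and ε, δ ∈ (0,1). Suppose C is a nonempty finite set of measurable NE approximators of cardinality K that (ε/12)-covers H, and assume the set {S ∈ U^m : ∃h ∈ H, |L_S(h) − L_D(h)| > ε/2} is measurable with respect to D^m. If m ≥ (18/ε²)·(ln(2/δ) + ln K), then with probability at least 1 − δ over the draw of an i.i.d. sample S ∼ D^m, every empirical risk minimizer h_S ∈ H (i.e., any h_S ∈ H with L_S(h_S) ≤ L_S(h) for all h ∈ H) satisfies L_D(h_S) ≤ inf_{h∈H} L_D(h) + ε. -/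
open Finset MeasureTheory

section NashDefs

variable {N : Type*} {A : N → Type*}

/-- `σ` is a mixed strategy profile: each `σ i` is a probability distribution on `A i`. -/
def IsMixedProfile [∀ i, Fintype (A i)] (σ : ∀ i, A i → ℝ) : Prop :=
  (∀ i a, 0 ≤ σ i a) ∧ ∀ i, ∑ a, σ i a = 1

/-- Expected utility of player `i` when the mixed strategy profile `σ` is played:
`u_i(σ) = ∑_{a ∈ A} (∏_j σ_j(a_j)) u_i(a)`. -/
def expUtil [Fintype N] [DecidableEq N] [∀ i, Fintype (A i)]
    (u : N → (∀ j, A j) → ℝ) (i : N) (σ : ∀ j, A j → ℝ) : ℝ :=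
  ∑ a : ∀ j, A j, (∏ j, σ j (a j)) * u i a

/-- The pure strategy of player `i` playing action `b` with probability one. -/
def pureStrat [∀ i, DecidableEq (A i)] {i : N} (b : A i) : A i → ℝ :=
  fun c => if c = b then 1 else 0

/-- Nash approximation loss:
`NashApr(σ, u) = max_{i ∈ N} max_{b ∈ A_i} [u_i(b, σ_{-i}) - u_i(σ)]`. -/
noncomputable def nashApr [Fintype N] [DecidableEq N] [Nonempty N]
    [∀ i, Fintype (A i)] [∀ i, DecidableEq (A i)] [∀ i, Nonempty (A i)]
    (σ : ∀ i, A i → ℝ) (u : N → (∀ j, A j) → ℝ) : ℝ :=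
  Finset.univ.sup' Finset.univ_nonempty fun i : N =>
    Finset.univ.sup' Finset.univ_nonempty fun b : A i =>
      expUtil u i (Function.update σ i (pureStrat b)) - expUtil u i σ

/-- ℓ1-distance between mixed strategy profiles:
`‖σ - σ'‖₁ = ∑_{i ∈ N} ∑_{a_i ∈ A_i} |σ_i(a_i) - σ'_i(a_i)|`. -/
def dist1 [Fintype N] [∀ i, Fintype (A i)] (σ σ' : ∀ i, A i → ℝ) : ℝ :=
  ∑ i, ∑ a, |σ i a - σ' i a|

/-- ℓmax-distance between game utilities:
`‖u - v‖max = max_{i ∈ N} max_{a ∈ A} |u_i(a) - v_i(a)|`. -/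
noncomputable def distMax [Fintype N] [DecidableEq N] [Nonempty N]
    [∀ i, Fintype (A i)] [∀ i, Nonempty (A i)]
    (u v : N → (∀ j, A j) → ℝ) : ℝ :=
  Finset.univ.sup' Finset.univ_nonempty fun i : N =>
    Finset.univ.sup' Finset.univ_nonempty fun a : ∀ j, A j => |u i a - v i a|

end NashDefs

/-- The set of all game utilities (with values in `[0,1]`) for fixed players `N`
and action space `A`, as a subtype. -/
abbrev GameUtil (N : Type*) (A : N → Type*) : Type _ :=
  {u : N → (∀ j, A j) → ℝ // ∀ i a, u i a ∈ Set.Icc (0 : ℝ) 1}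

/-- An NE approximator maps game utilities to mixed strategy profiles. -/
abbrev NEApprox (N : Type*) (A : N → Type*) [∀ i, Fintype (A i)] : Type _ :=
  {h : GameUtil N A → ∀ i, A i → ℝ // ∀ u, IsMixedProfile (h u)}

section Risk

variable {N : Type*} {A : N → Type*} [Fintype N] [DecidableEq N] [Nonempty N]
  [∀ i, Fintype (A i)] [∀ i, DecidableEq (A i)] [∀ i, Nonempty (A i)]

/-- Nash approximation loss of an NE approximator on a game. -/
noncomputable def nashLoss (h : NEApprox N A) (u : GameUtil N A) : ℝ :=
  nashApr (h.1 u) u.1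

/-- True risk `L_D(h) = E_{u ∼ D}[NashApr(h(u), u)]`. -/
noncomputable def trueRisk (D : Measure (GameUtil N A)) (h : NEApprox N A) : ℝ :=
  ∫ u, nashLoss h u ∂D

/-- Empirical risk `L_S(h) = (1/m) ∑_j NashApr(h(u⁽ʲ⁾), u⁽ʲ⁾)`. -/
noncomputable def empRisk {m : ℕ} (S : Fin m → GameUtil N A) (h : NEApprox N A) : ℝ :=
  (1 / (m : ℝ)) * ∑ j, nashLoss h (S j)

/-- `C` `r`-covers `H` under the `ℓ_{∞,1}`-distance:
every `h ∈ H` is within `ℓ_{∞,1}`-distance `r` of some `g ∈ C`. -/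
def Covers (r : ℝ) (C : Finset (NEApprox N A)) (H : Set (NEApprox N A)) : Prop :=
  ∀ h ∈ H, ∃ g ∈ C, ∀ u, dist1 (h.1 u) (g.1 u) ≤ r

end Risk

namespace PACNE
open Real MeasureTheory

lemma hoeffding_scalar (p : ℝ) (hp0 : 0 ≤ p) (hp1 : p ≤ 1) (s : ℝ) :
    1 - p + p * Real.exp s ≤ Real.exp (s * p + s ^ 2 / 8) := by
  rcases eq_or_lt_of_le hp0 with h0 | h0
  · subst h0
    simpa using Real.one_le_exp (by nlinarith [sq_nonneg s] : (0:ℝ) ≤ s * 0 + s ^ 2 / 8)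
  rcases eq_or_lt_of_le hp1 with h1 | h1
  · subst h1
    simpa using Real.exp_le_exp.2 (by nlinarith [sq_nonneg s] : s ≤ s * 1 + s ^ 2 / 8)
  -- now 0 < p < 1
  have hd : ∀ x : ℝ, 0 < 1 - p + p * Real.exp x := fun x => by
    have := Real.exp_pos x; nlinarith
  set q : ℝ → ℝ := fun x => p * Real.exp x / (1 - p + p * Real.exp x) with hq_def
  have hdD : ∀ x : ℝ, HasDerivAt (fun y => 1 - p + p * Real.exp y) (p * Real.exp x) x := by
    intro x
    exact ((Real.hasDerivAt_exp x).const_mul p).const_add (1 - p)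
  have hq01 : ∀ x, 0 < q x ∧ q x < 1 := by
    intro x
    constructor
    · exact div_pos (by positivity) (hd x)
    · rw [hq_def]
      simp only
      rw [div_lt_one (hd x)]; nlinarith [Real.exp_pos x]
  have hqD : ∀ x : ℝ, HasDerivAt q (q x * (1 - q x)) x := by
    intro x
    have h := ((Real.hasDerivAt_exp x).const_mul p).div (hdD x) (hd x).ne'
    have hne := (hd x).ne'
    have heq : q x * (1 - q x) = (p * Real.exp x * (1 - p + p * Real.exp x)
        - p * Real.exp x * (p * Real.exp x)) / (1 - p + p * Real.exp x) ^ 2 := by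
      rw [hq_def]
      field_simp
    rw [heq]; exact h
  have hq0 : q 0 = p := by
    rw [hq_def]
    simp only [Real.exp_zero, mul_one]
    have hne : 1 - p + p ≠ 0 := by norm_num
    field_simp
    ring
  have hqlip : ∀ x : ℝ, |q x - p| ≤ |x| / 4 := by
    intro x
    have key := Convex.norm_image_sub_le_of_norm_hasDerivWithin_le
      (f := q) (f' := fun x => q x * (1 - q x)) (s := Set.univ) (C := 1/4)
      (fun y _ => (hqD y).hasDerivWithinAt)
      (fun y _ => by
        obtain ⟨ha, hb⟩ := hq01 y
        rw [Real.norm_eq_abs, abs_of_nonneg (by nlinarith)]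
        nlinarith [sq_nonneg (q y - 1/2)])
      convex_univ (Set.mem_univ 0) (Set.mem_univ x)
    rw [hq0] at key
    simp only [Real.norm_eq_abs, sub_zero] at key
    linarith [key]
  set F : ℝ → ℝ := fun x => x * p + x ^ 2 / 8 - Real.log (1 - p + p * Real.exp x) with hF_def
  have hFD : ∀ x : ℝ, HasDerivAt F (p + x / 4 - q x) x := by
    intro x
    have h1 : HasDerivAt (fun y : ℝ => y * p + y ^ 2 / 8) (p + x / 4) x := by
      have h2 := ((hasDerivAt_pow 2 x).div_const 8)
      have h3 := (hasDerivAt_id x).mul_const p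
      exact (h3.add h2).congr_deriv (by push_cast; ring)
    have h3 : HasDerivAt (fun y => Real.log (1 - p + p * Real.exp y)) (q x) x := by
      have h4 := (hdD x).log (hd x).ne'
      convert h4 using 1
    exact h1.sub h3
  have hF0 : F 0 = 0 := by
    rw [hF_def]; simp
  have hFnonneg : ∀ x : ℝ, 0 ≤ F x := by
    intro x
    rcases le_total 0 x with hx | hx
    · have hmono : MonotoneOn F (Set.Ici 0) := by
        apply monotoneOn_of_deriv_nonneg (convex_Ici 0)
        · exact fun y _ => ((hFD y).differentiableAt).continuousAt.continuousWithinAt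
        · exact fun y _ => ((hFD y).differentiableAt).differentiableWithinAt
        · intro y hy
          rw [(hFD y).deriv]
          rw [interior_Ici] at hy
          have h5 := hqlip y
          rw [show |y| = y from abs_of_pos hy] at h5
          have h6 := (abs_le.1 h5).2
          linarith
      have h7 := hmono Set.self_mem_Ici (Set.mem_Ici.2 hx) hx
      rw [hF0] at h7; exact h7
    · have hanti : AntitoneOn F (Set.Iic 0) := by
        apply antitoneOn_of_deriv_nonpos (convex_Iic 0)
        · exact fun y _ => ((hFD y).differentiableAt).continuousAt.continuousWithinAt
        · exact fun y _ => ((hFD y).differentiableAt).differentiableWithinAt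
        · intro y hy
          rw [(hFD y).deriv]
          rw [interior_Iic] at hy
          have h5 := hqlip y
          rw [show |y| = -y from abs_of_neg (Set.mem_Iio.1 hy)] at h5
          have h6 := (abs_le.1 h5).1
          linarith
      have h7 := hanti (Set.mem_Iic.2 hx) Set.self_mem_Iic hx
      rw [hF0] at h7; exact h7
  have h8 := hFnonneg s
  rw [hF_def] at h8
  simp only at h8
  have hlog : Real.log (1 - p + p * Real.exp s) ≤ s * p + s ^ 2 / 8 := by linarith
  exact (Real.log_le_iff_le_exp (hd s)).1 hlog

section ProbLemmas
variable {Ω : Type*} [MeasurableSpace Ω] (ν : Measure Ω) [IsProbabilityMeasure ν]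

lemma integrable_exp_comp (f : Ω → ℝ) (hfm : Measurable f)
    (hf0 : ∀ ω, 0 ≤ f ω) (hf1 : ∀ ω, f ω ≤ 1) (s : ℝ) :
    Integrable (fun ω => Real.exp (s * f ω)) ν := by
  refine Integrable.mono' (integrable_const (Real.exp |s|))
    ((hfm.const_mul s).exp.aestronglyMeasurable) (ae_of_all _ fun ω => ?_)
  rw [Real.norm_eq_abs, abs_of_pos (Real.exp_pos _)]
  apply Real.exp_le_exp.2
  calc s * f ω ≤ |s * f ω| := le_abs_self _
    _ = |s| * |f ω| := abs_mul _ _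
    _ ≤ |s| * 1 := by
        apply mul_le_mul_of_nonneg_left _ (abs_nonneg s)
        rw [abs_of_nonneg (hf0 ω)]; exact hf1 ω
    _ = |s| := mul_one _

lemma mgf_bound (f : Ω → ℝ) (hfm : Measurable f)
    (hf0 : ∀ ω, 0 ≤ f ω) (hf1 : ∀ ω, f ω ≤ 1) (s : ℝ) :
    ∫ ω, Real.exp (s * f ω) ∂ν ≤ Real.exp (s * (∫ ω, f ω ∂ν) + s ^ 2 / 8) := by
  have hint : Integrable f ν := by
    refine Integrable.mono' (integrable_const 1) hfm.aestronglyMeasurable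
      (ae_of_all _ fun ω => ?_)
    rw [Real.norm_eq_abs, abs_of_nonneg (hf0 ω)]; exact hf1 ω
  set p := ∫ ω, f ω ∂ν with hp
  have hp0 : 0 ≤ p := integral_nonneg hf0
  have hp1 : p ≤ 1 := by
    calc p ≤ ∫ _ω, (1:ℝ) ∂ν := integral_mono hint (integrable_const 1) hf1
      _ = 1 := by simp
  have hpt : ∀ ω, Real.exp (s * f ω) ≤ 1 - f ω + f ω * Real.exp s := by
    intro ω
    have hcx := convexOn_exp.2 (Set.mem_univ (0:ℝ)) (Set.mem_univ s)
      (by linarith [hf1 ω] : 0 ≤ 1 - f ω) (hf0 ω) (by ring)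
    simpa [mul_comm] using hcx
  calc ∫ ω, Real.exp (s * f ω) ∂ν
      ≤ ∫ ω, (1 - f ω + f ω * Real.exp s) ∂ν := by
        apply integral_mono (integrable_exp_comp ν f hfm hf0 hf1 s) _ hpt
        exact ((integrable_const 1).sub hint).add (hint.mul_const _)
    _ = 1 - p + p * Real.exp s := by
        have h1 : Integrable (fun ω => 1 - f ω) ν := (integrable_const 1).sub hint
        rw [integral_add h1 (hint.mul_const _), integral_sub (integrable_const 1) hint,
          integral_mul_const]
        simp [hp]
    _ ≤ Real.exp (s * p + s ^ 2 / 8) := hoeffding_scalar p hp0 hp1 s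

open ProbabilityTheory in
lemma hoeffding_one_sided (f : Ω → ℝ) (hfm : Measurable f)
    (hf0 : ∀ ω, 0 ≤ f ω) (hf1 : ∀ ω, f ω ≤ 1) (m : ℕ) (t : ℝ) (ht : 0 < t) :
    ((Measure.pi fun _ : Fin m => ν) {S | (m:ℝ) * ((∫ ω, f ω ∂ν) + t) ≤ ∑ j, f (S j)}).toReal
      ≤ Real.exp (-2 * m * t ^ 2) := by
  letI : MeasureSpace Ω := ⟨ν⟩
  haveI : IsProbabilityMeasure (volume : Measure Ω) := ‹IsProbabilityMeasure ν›
  have hvol : (Measure.pi fun _ : Fin m => ν) = (volume : Measure (Fin m → Ω)) :=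
    MeasureTheory.volume_pi.symm
  set s : ℝ := 4 * t with hs
  set p : ℝ := ∫ ω, f ω ∂ν with hp
  set X : (Fin m → Ω) → ℝ := fun S => ∑ j, f (S j) with hX
  have hexpprod : ∀ S : Fin m → Ω, Real.exp (s * X S) = ∏ j, Real.exp (s * f (S j)) := by
    intro S
    rw [hX]
    simp only
    rw [Finset.mul_sum, Real.exp_sum]
  have hint : Integrable (fun S => Real.exp (s * X S)) (Measure.pi fun _ : Fin m => ν) := by
    have := Integrable.fintype_prod (ι := Fin m)
      (f := fun _ ω => Real.exp (s * f ω)) (fun _ => integrable_exp_comp ν f hfm hf0 hf1 s)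
    convert this using 1
    funext S
    exact hexpprod S
  have hmgf : mgf X (Measure.pi fun _ : Fin m => ν) s = (∫ ω, Real.exp (s * f ω) ∂ν) ^ m := by
    rw [mgf]
    calc ∫ S, Real.exp (s * X S) ∂(Measure.pi fun _ : Fin m => ν)
        = ∫ S : Fin m → Ω, ∏ j, Real.exp (s * f (S j)) := by
          rw [hvol]; exact integral_congr_ae (ae_of_all _ hexpprod)
      _ = (∫ ω, Real.exp (s * f ω) ∂ν) ^ m := by
          rw [← hvol, MeasureTheory.integral_fintype_prod_eq_pow (ι := Fin m) (fun ω => Real.exp (s * f ω))]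
          simp only [Fintype.card_fin]
  have hchern := measure_ge_le_exp_mul_mgf (μ := Measure.pi fun _ : Fin m => ν)
    (X := X) ((m : ℝ) * (p + t)) (by positivity : (0:ℝ) ≤ s) hint
  calc ((Measure.pi fun _ : Fin m => ν) {S | (m:ℝ) * (p + t) ≤ X S}).toReal
      ≤ Real.exp (-s * ((m:ℝ) * (p + t))) * mgf X (Measure.pi fun _ : Fin m => ν) s := hchern
    _ ≤ Real.exp (-s * ((m:ℝ) * (p + t))) * Real.exp (s * p + s ^ 2 / 8) ^ m := by
        rw [hmgf]
        apply mul_le_mul_of_nonneg_left _ (Real.exp_pos _).le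
        apply pow_le_pow_left₀ (integral_nonneg fun ω => (Real.exp_pos _).le)
        exact mgf_bound ν f hfm hf0 hf1 s
    _ = Real.exp (-s * ((m:ℝ) * (p + t)) + (m:ℝ) * (s * p + s ^ 2 / 8)) := by
        rw [← Real.exp_nat_mul, ← Real.exp_add]
    _ ≤ Real.exp (-2 * m * t ^ 2) := by
        apply Real.exp_le_exp.2
        rw [hs]
        ring_nf
        nlinarith [sq_nonneg t, Nat.cast_nonneg (α := ℝ) m]

lemma hoeffding_two_sided (f : Ω → ℝ) (hfm : Measurable f)
    (hf0 : ∀ ω, 0 ≤ f ω) (hf1 : ∀ ω, f ω ≤ 1) (m : ℕ) (hm : 1 ≤ m) (t : ℝ) (ht : 0 < t) :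
    (Measure.pi fun _ : Fin m => ν)
        {S | t ≤ |(1/(m:ℝ)) * ∑ j, f (S j) - ∫ ω, f ω ∂ν|}
      ≤ ENNReal.ofReal (2 * Real.exp (-2 * m * t ^ 2)) := by
  haveI : IsProbabilityMeasure (Measure.pi fun _ : Fin m => ν) := by infer_instance
  set μ := Measure.pi fun _ : Fin m => ν with hμ
  set p : ℝ := ∫ ω, f ω ∂ν with hp
  have hmpos : (0:ℝ) < m := by exact_mod_cast hm
  set g : Ω → ℝ := fun ω => 1 - f ω with hg
  have hgm : Measurable g := (measurable_const.sub hfm)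
  have hg0 : ∀ ω, 0 ≤ g ω := fun ω => by simp [hg]; linarith [hf1 ω]
  have hg1 : ∀ ω, g ω ≤ 1 := fun ω => by simp [hg]; linarith [hf0 ω]
  have hintf : Integrable f ν := by
    refine Integrable.mono' (integrable_const 1) hfm.aestronglyMeasurable
      (ae_of_all _ fun ω => ?_)
    rw [Real.norm_eq_abs, abs_of_nonneg (hf0 ω)]; exact hf1 ω
  have hgint : ∫ ω, g ω ∂ν = 1 - p := by
    rw [hg]
    rw [integral_sub (integrable_const 1) hintf]
    simp [hp]
  have hsub : {S : Fin m → Ω | t ≤ |(1/(m:ℝ)) * ∑ j, f (S j) - p|} ⊆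
      {S | (m:ℝ) * (p + t) ≤ ∑ j, f (S j)} ∪
      {S | (m:ℝ) * ((∫ ω, g ω ∂ν) + t) ≤ ∑ j, g (S j)} := by
    intro S hS
    simp only [Set.mem_setOf_eq] at hS
    rcases le_abs.1 hS with h | h
    · left
      simp only [Set.mem_setOf_eq]
      have : p + t ≤ (1/(m:ℝ)) * ∑ j, f (S j) := by linarith
      calc (m:ℝ) * (p + t) ≤ (m:ℝ) * ((1/(m:ℝ)) * ∑ j, f (S j)) :=
            mul_le_mul_of_nonneg_left this hmpos.le
        _ = ∑ j, f (S j) := by field_simp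
    · right
      simp only [Set.mem_setOf_eq, hgint]
      have hsum : ∑ j, g (S j) = (m:ℝ) - ∑ j, f (S j) := by
        simp [hg, Finset.sum_sub_distrib]
      have : (1/(m:ℝ)) * ∑ j, f (S j) ≤ p - t := by linarith
      have h2 : ∑ j, f (S j) ≤ (m:ℝ) * (p - t) := by
        calc ∑ j, f (S j) = (m:ℝ) * ((1/(m:ℝ)) * ∑ j, f (S j)) := by field_simp
          _ ≤ (m:ℝ) * (p - t) := mul_le_mul_of_nonneg_left this hmpos.le
      rw [hsum]
      nlinarith
  calc μ {S | t ≤ |(1/(m:ℝ)) * ∑ j, f (S j) - p|}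
      ≤ μ ({S | (m:ℝ) * (p + t) ≤ ∑ j, f (S j)} ∪
          {S | (m:ℝ) * ((∫ ω, g ω ∂ν) + t) ≤ ∑ j, g (S j)}) := measure_mono hsub
    _ ≤ μ {S | (m:ℝ) * (p + t) ≤ ∑ j, f (S j)} +
          μ {S | (m:ℝ) * ((∫ ω, g ω ∂ν) + t) ≤ ∑ j, g (S j)} := measure_union_le _ _
    _ ≤ ENNReal.ofReal (Real.exp (-2 * m * t ^ 2)) + ENNReal.ofReal (Real.exp (-2 * m * t ^ 2)) := by
        gcongr
        · rw [ENNReal.le_ofReal_iff_toReal_le (measure_ne_top _ _) (Real.exp_pos _).le]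
          exact hoeffding_one_sided ν f hfm hf0 hf1 m t ht
        · rw [ENNReal.le_ofReal_iff_toReal_le (measure_ne_top _ _) (Real.exp_pos _).le]
          exact hoeffding_one_sided ν g hgm hg0 hg1 m t ht
    _ = ENNReal.ofReal (2 * Real.exp (-2 * m * t ^ 2)) := by
        rw [← ENNReal.ofReal_add (Real.exp_pos _).le (Real.exp_pos _).le]
        ring_nf

end ProbLemmas

end PACNE

namespace PACNE
set_option linter.unusedSectionVars false
section GameLemmas
variable {N : Type*} {A : N → Type*} [Fintype N] [DecidableEq N] [Nonempty N]
  [∀ i, Fintype (A i)] [∀ i, DecidableEq (A i)] [∀ i, Nonempty (A i)]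

lemma sum_prod_pi (f : ∀ i, A i → ℝ) :
    ∑ a : ∀ i, A i, ∏ i, f i (a i) = ∏ i, ∑ b, f i b := by
  rw [Finset.prod_univ_sum, Fintype.piFinset_univ]

lemma dist1_nonneg (σ τ : ∀ i, A i → ℝ) : 0 ≤ dist1 σ τ :=
  Finset.sum_nonneg fun _ _ => Finset.sum_nonneg fun _ _ => abs_nonneg _

lemma sum_abs_prod_sub {σ τ : ∀ i, A i → ℝ}
    (hσ : IsMixedProfile σ) (hτ : IsMixedProfile τ) :
    ∑ a : ∀ j, A j, |(∏ j, σ j (a j)) - ∏ j, τ j (a j)| ≤ dist1 σ τ := by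
  set hyb : Finset N → (∀ j, A j) → ℝ :=
    fun s a => ∏ j, (if j ∈ s then σ j (a j) else τ j (a j)) with hhyb
  have key : ∀ s : Finset N,
      ∑ a : ∀ j, A j, |hyb s a - hyb ∅ a| ≤ ∑ j ∈ s, ∑ b, |σ j b - τ j b| := by
    intro s
    induction s using Finset.induction_on with
    | empty => simp
    | @insert i s hi ih =>
      have step : ∀ a : ∀ j, A j,
          hyb (insert i s) a - hyb s a
            = (σ i (a i) - τ i (a i)) * ∏ j ∈ Finset.univ.erase i,
                (if j ∈ s then σ j (a j) else τ j (a j)) := by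
        intro a
        have h1 : hyb (insert i s) a = σ i (a i) * ∏ j ∈ Finset.univ.erase i,
            (if j ∈ s then σ j (a j) else τ j (a j)) := by
          rw [hhyb]
          simp only
          rw [← Finset.mul_prod_erase Finset.univ _ (Finset.mem_univ i)]
          simp only [Finset.mem_insert, true_or, if_true]
          congr 1
          apply Finset.prod_congr rfl
          intro j hj
          have hji : j ≠ i := (Finset.mem_erase.1 hj).1
          simp [hji]
        have h2 : hyb s a = τ i (a i) * ∏ j ∈ Finset.univ.erase i,
            (if j ∈ s then σ j (a j) else τ j (a j)) := by
          rw [hhyb]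
          simp only
          rw [← Finset.mul_prod_erase Finset.univ _ (Finset.mem_univ i)]
          simp [hi]
        rw [h1, h2]; ring
      have habs : ∀ a : ∀ j, A j,
          |hyb (insert i s) a - hyb s a|
            = |σ i (a i) - τ i (a i)| * ∏ j ∈ Finset.univ.erase i,
                (if j ∈ s then σ j (a j) else τ j (a j)) := by
        intro a
        rw [step a, abs_mul]
        congr 1
        rw [abs_of_nonneg]
        exact Finset.prod_nonneg fun j _ => by
          split
          · exact hσ.1 j (a j)
          · exact hτ.1 j (a j)
      have hfirst : ∑ a : ∀ j, A j, |hyb (insert i s) a - hyb s a| = ∑ b, |σ i b - τ i b| := by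
        set G : ∀ j, A j → ℝ := Function.update
          (fun j (b : A j) => if j ∈ s then σ j b else τ j b) i (fun b => |σ i b - τ i b|)
          with hG
        have hGprod : ∀ a : ∀ j, A j,
            |hyb (insert i s) a - hyb s a| = ∏ j, G j (a j) := by
          intro a
          rw [habs a, ← Finset.mul_prod_erase Finset.univ (fun j => G j (a j))
            (Finset.mem_univ i)]
          congr 1
          · rw [hG, Function.update_self]
          · apply Finset.prod_congr rfl
            intro j hj
            have hji : j ≠ i := (Finset.mem_erase.1 hj).1
            rw [hG, Function.update_of_ne hji]
        calc ∑ a : ∀ j, A j, |hyb (insert i s) a - hyb s a|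
            = ∑ a : ∀ j, A j, ∏ j, G j (a j) := Finset.sum_congr rfl fun a _ => hGprod a
          _ = ∏ j, ∑ b, G j b := sum_prod_pi G
          _ = (∑ b, |σ i b - τ i b|) * ∏ j ∈ Finset.univ.erase i, ∑ b, G j b := by
              rw [← Finset.mul_prod_erase Finset.univ (fun j => ∑ b, G j b)
                (Finset.mem_univ i), hG, Function.update_self]
          _ = ∑ b, |σ i b - τ i b| := by
              rw [Finset.prod_congr rfl (fun j hj => ?_), Finset.prod_const_one, mul_one]
              have hji : j ≠ i := (Finset.mem_erase.1 hj).1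
              rw [hG, Function.update_of_ne hji]
              split
              · exact hσ.2 j
              · exact hτ.2 j
      calc ∑ a : ∀ j, A j, |hyb (insert i s) a - hyb ∅ a|
          ≤ ∑ a : ∀ j, A j, (|hyb (insert i s) a - hyb s a| + |hyb s a - hyb ∅ a|) := by
            apply Finset.sum_le_sum
            intro a _
            exact abs_sub_le _ _ _
        _ = (∑ a : ∀ j, A j, |hyb (insert i s) a - hyb s a|)
              + ∑ a : ∀ j, A j, |hyb s a - hyb ∅ a| := Finset.sum_add_distrib
        _ ≤ (∑ b, |σ i b - τ i b|) + ∑ j ∈ s, ∑ b, |σ j b - τ j b| := by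
            rw [hfirst]
            exact add_le_add le_rfl ih
        _ = ∑ j ∈ insert i s, ∑ b, |σ j b - τ j b| := by rw [Finset.sum_insert hi]
  have h := key Finset.univ
  simpa [hhyb, dist1] using h

variable {u : N → (∀ j, A j) → ℝ} {σ τ : ∀ i, A i → ℝ}

lemma sum_prod_mixed (hσ : IsMixedProfile σ) : ∑ a : ∀ j, A j, ∏ j, σ j (a j) = 1 := by
  rw [sum_prod_pi]
  rw [Finset.prod_congr rfl fun j _ => hσ.2 j, Finset.prod_const_one]

lemma prod_mixed_nonneg (hσ : IsMixedProfile σ) (a : ∀ j, A j) :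
    0 ≤ ∏ j, σ j (a j) :=
  Finset.prod_nonneg fun j _ => hσ.1 j (a j)

lemma expUtil_nonneg (hu : ∀ i a, u i a ∈ Set.Icc (0:ℝ) 1) (hσ : IsMixedProfile σ) (i : N) :
    0 ≤ expUtil u i σ :=
  Finset.sum_nonneg fun a _ => mul_nonneg (prod_mixed_nonneg hσ a) (hu i a).1

lemma expUtil_le_one (hu : ∀ i a, u i a ∈ Set.Icc (0:ℝ) 1) (hσ : IsMixedProfile σ) (i : N) :
    expUtil u i σ ≤ 1 := by
  calc expUtil u i σ ≤ ∑ a : ∀ j, A j, ∏ j, σ j (a j) := by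
        apply Finset.sum_le_sum
        intro a _
        calc (∏ j, σ j (a j)) * u i a ≤ (∏ j, σ j (a j)) * 1 :=
              mul_le_mul_of_nonneg_left (hu i a).2 (prod_mixed_nonneg hσ a)
          _ = ∏ j, σ j (a j) := mul_one _
    _ = 1 := sum_prod_mixed hσ

lemma abs_expUtil_sub_le (hu : ∀ i a, u i a ∈ Set.Icc (0:ℝ) 1)
    (hσ : IsMixedProfile σ) (hτ : IsMixedProfile τ) (i : N) :
    |expUtil u i σ - expUtil u i τ| ≤ dist1 σ τ := by
  rw [expUtil, expUtil, ← Finset.sum_sub_distrib]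
  calc |∑ a : ∀ j, A j, ((∏ j, σ j (a j)) * u i a - (∏ j, τ j (a j)) * u i a)|
      ≤ ∑ a : ∀ j, A j, |(∏ j, σ j (a j)) * u i a - (∏ j, τ j (a j)) * u i a| :=
        Finset.abs_sum_le_sum_abs _ _
    _ ≤ ∑ a : ∀ j, A j, |(∏ j, σ j (a j)) - ∏ j, τ j (a j)| := by
        apply Finset.sum_le_sum
        intro a _
        rw [← sub_mul, abs_mul]
        calc |(∏ j, σ j (a j)) - ∏ j, τ j (a j)| * |u i a|
            ≤ |(∏ j, σ j (a j)) - ∏ j, τ j (a j)| * 1 := by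
              apply mul_le_mul_of_nonneg_left _ (abs_nonneg _)
              rw [abs_of_nonneg (hu i a).1]
              exact (hu i a).2
          _ = _ := mul_one _
    _ ≤ dist1 σ τ := sum_abs_prod_sub hσ hτ

lemma isMixedProfile_update (hσ : IsMixedProfile σ) (i : N) (b : A i) :
    IsMixedProfile (Function.update σ i (pureStrat b)) := by
  constructor
  · intro j a
    rcases eq_or_ne j i with rfl | hj
    · rw [Function.update_self, pureStrat]
      split <;> norm_num
    · rw [Function.update_of_ne hj]
      exact hσ.1 j a
  · intro j
    rcases eq_or_ne j i with rfl | hj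
    · rw [Function.update_self]
      simp [pureStrat]
    · rw [Function.update_of_ne hj]
      exact hσ.2 j

lemma dist1_update_le (i : N) (g : A i → ℝ) :
    dist1 (Function.update σ i g) (Function.update τ i g) ≤ dist1 σ τ := by
  rw [dist1, dist1]
  apply Finset.sum_le_sum
  intro j _
  rcases eq_or_ne j i with rfl | hj
  · rw [Function.update_self, Function.update_self]
    simp
    exact Finset.sum_nonneg fun a _ => abs_nonneg _
  · rw [Function.update_of_ne hj, Function.update_of_ne hj]

lemma nashApr_le_nashApr_add (hu : ∀ i a, u i a ∈ Set.Icc (0:ℝ) 1)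
    (hσ : IsMixedProfile σ) (hτ : IsMixedProfile τ) :
    nashApr σ u ≤ nashApr τ u + 2 * dist1 σ τ := by
  rw [nashApr]
  apply Finset.sup'_le
  intro i _
  apply Finset.sup'_le
  intro b _
  have h1 : |expUtil u i (Function.update σ i (pureStrat b))
      - expUtil u i (Function.update τ i (pureStrat b))| ≤ dist1 σ τ := by
    calc |expUtil u i (Function.update σ i (pureStrat b))
        - expUtil u i (Function.update τ i (pureStrat b))|
        ≤ dist1 (Function.update σ i (pureStrat b)) (Function.update τ i (pureStrat b)) :=
          abs_expUtil_sub_le hu (isMixedProfile_update hσ i b) (isMixedProfile_update hτ i b) i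
      _ ≤ dist1 σ τ := dist1_update_le i _
  have h2 : |expUtil u i σ - expUtil u i τ| ≤ dist1 σ τ := abs_expUtil_sub_le hu hσ hτ i
  have h3 : expUtil u i (Function.update τ i (pureStrat b)) - expUtil u i τ ≤ nashApr τ u := by
    rw [nashApr]
    exact Finset.le_sup'_of_le _ (Finset.mem_univ i)
      (Finset.le_sup' (f := fun b : A i =>
        expUtil u i (Function.update τ i (pureStrat b)) - expUtil u i τ) (Finset.mem_univ b))
  have h1' := (abs_le.1 h1).2
  have h2' := (abs_le.1 h2).1
  linarith

lemma abs_nashApr_sub_le (hu : ∀ i a, u i a ∈ Set.Icc (0:ℝ) 1)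
    (hσ : IsMixedProfile σ) (hτ : IsMixedProfile τ) :
    |nashApr σ u - nashApr τ u| ≤ 2 * dist1 σ τ := by
  rw [abs_le]
  constructor
  · have := nashApr_le_nashApr_add hu hτ hσ
    have heq : dist1 τ σ = dist1 σ τ := by
      rw [dist1, dist1]
      exact Finset.sum_congr rfl fun i _ => Finset.sum_congr rfl fun a _ => abs_sub_comm _ _
    rw [heq] at this
    linarith
  · linarith [nashApr_le_nashApr_add hu hσ hτ]

lemma expUtil_decomp (hσ : IsMixedProfile σ) (i : N) :
    expUtil u i σ = ∑ b, σ i b * expUtil u i (Function.update σ i (pureStrat b)) := by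
  have hupd : ∀ (b : A i) (a : ∀ j, A j),
      (∏ j, Function.update σ i (pureStrat b) j (a j))
        = (if a i = b then 1 else 0) * ∏ j ∈ Finset.univ.erase i, σ j (a j) := by
    intro b a
    rw [← Finset.mul_prod_erase Finset.univ _ (Finset.mem_univ i), Function.update_self,
      pureStrat]
    congr 1
    apply Finset.prod_congr rfl
    intro j hj
    rw [Function.update_of_ne (Finset.mem_erase.1 hj).1]
  calc expUtil u i σ
      = ∑ a : ∀ j, A j, σ i (a i) * ((∏ j ∈ Finset.univ.erase i, σ j (a j)) * u i a) := by
        rw [expUtil]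
        apply Finset.sum_congr rfl
        intro a _
        rw [← Finset.mul_prod_erase Finset.univ _ (Finset.mem_univ i)]
        ring
    _ = ∑ a : ∀ j, A j, ∑ b, (if a i = b then σ i b * ((∏ j ∈ Finset.univ.erase i, σ j (a j)) * u i a) else 0) := by
        apply Finset.sum_congr rfl
        intro a _
        rw [Finset.sum_ite_eq Finset.univ (a i)]
        simp
    _ = ∑ b, ∑ a : ∀ j, A j, (if a i = b then σ i b * ((∏ j ∈ Finset.univ.erase i, σ j (a j)) * u i a) else 0) :=
        Finset.sum_comm
    _ = ∑ b, σ i b * expUtil u i (Function.update σ i (pureStrat b)) := by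
        apply Finset.sum_congr rfl
        intro b _
        rw [expUtil, Finset.mul_sum]
        apply Finset.sum_congr rfl
        intro a _
        rw [hupd b a]
        split <;> ring

lemma nashApr_nonneg (hσ : IsMixedProfile σ) : 0 ≤ nashApr σ u := by
  obtain ⟨i⟩ := ‹Nonempty N›
  have hsup : expUtil u i σ ≤ Finset.univ.sup' Finset.univ_nonempty
      (fun b : A i => expUtil u i (Function.update σ i (pureStrat b))) := by
    calc expUtil u i σ
        = ∑ b, σ i b * expUtil u i (Function.update σ i (pureStrat b)) := expUtil_decomp hσ i
      _ ≤ ∑ b, σ i b * Finset.univ.sup' Finset.univ_nonempty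
            (fun b : A i => expUtil u i (Function.update σ i (pureStrat b))) := by
          apply Finset.sum_le_sum
          intro b _
          exact mul_le_mul_of_nonneg_left (Finset.le_sup' (f := fun b : A i =>
            expUtil u i (Function.update σ i (pureStrat b))) (Finset.mem_univ b)) (hσ.1 i b)
      _ = _ := by rw [← Finset.sum_mul, hσ.2 i, one_mul]
  obtain ⟨b, _, hb⟩ := Finset.exists_mem_eq_sup' (Finset.univ_nonempty)
    (fun b : A i => expUtil u i (Function.update σ i (pureStrat b)))
  rw [nashApr]
  apply Finset.le_sup'_of_le _ (Finset.mem_univ i)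
  apply Finset.le_sup'_of_le _ (Finset.mem_univ b)
  rw [hb] at hsup
  linarith

lemma nashApr_le_one (hu : ∀ i a, u i a ∈ Set.Icc (0:ℝ) 1) (hσ : IsMixedProfile σ) :
    nashApr σ u ≤ 1 := by
  rw [nashApr]
  apply Finset.sup'_le
  intro i _
  apply Finset.sup'_le
  intro b _
  have h1 := expUtil_le_one hu (isMixedProfile_update hσ i b) i
  have h2 := expUtil_nonneg hu hσ i
  linarith

end GameLemmas

end PACNE

open Real in
theorem agnostic_pac_learnability_of_NE
    {N : Type*} [Fintype N] [DecidableEq N] [Nonempty N]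
    {A : N → Type*} [∀ i, Fintype (A i)] [∀ i, DecidableEq (A i)] [∀ i, Nonempty (A i)]
    (H : Set (NEApprox N A)) (hH : H.Nonempty)
    (hHmeas : ∀ h ∈ H, Measurable (nashLoss h))
    (D : Measure (GameUtil N A)) [IsProbabilityMeasure D]
    (ε δ : ℝ) (hε : ε ∈ Set.Ioo (0 : ℝ) 1) (hδ : δ ∈ Set.Ioo (0 : ℝ) 1)
    (C : Finset (NEApprox N A)) (hC : C.Nonempty) (K : ℕ) (hK : C.card = K)
    (hCmeas : ∀ g ∈ C, Measurable (nashLoss g))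
    (hcover : Covers (ε / 12) C H)
    {m : ℕ}
    (hsetmeas : MeasurableSet
      {S : Fin m → GameUtil N A | ∃ h ∈ H, |empRisk S h - trueRisk D h| > ε / 2})
    (hm : 18 / ε ^ 2 * (Real.log (2 / δ) + Real.log K) ≤ (m : ℝ)) :
    ENNReal.ofReal (1 - δ) ≤
      (MeasureTheory.Measure.pi fun _ : Fin m => D)
        {S : Fin m → GameUtil N A | ∀ hS ∈ H,
          (∀ h ∈ H, empRisk S hS ≤ empRisk S h) →
            trueRisk D hS ≤ sInf (trueRisk D '' H) + ε} := by
  classical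
  obtain ⟨hε0, hε1⟩ := hε
  obtain ⟨hδ0, hδ1⟩ := hδ
  haveI : IsProbabilityMeasure (Measure.pi fun _ : Fin m => D) := by infer_instance
  set μ := Measure.pi fun _ : Fin m => D with hμdef
  have hK1 : 1 ≤ K := by
    rw [← hK]
    exact Finset.card_pos.2 hC
  have hKR : (1:ℝ) ≤ K := by exact_mod_cast hK1
  -- m ≥ 1
  have hm1 : 1 ≤ m := by
    by_contra hcon
    push_neg at hcon
    interval_cases m
    have hlog2 : 0 < Real.log (2/δ) := Real.log_pos (by rw [lt_div_iff₀ hδ0]; linarith)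
    have hlogK : 0 ≤ Real.log K := Real.log_nonneg hKR
    have hpos : 0 < 18 / ε ^ 2 * (Real.log (2/δ) + Real.log K) := by positivity
    simp only [Nat.cast_zero] at hm
    linarith
  have hmpos : (0:ℝ) < m := by exact_mod_cast hm1
  -- basic bounds on nashLoss
  have hL0 : ∀ (h : NEApprox N A) (u : GameUtil N A), 0 ≤ nashLoss h u :=
    fun h u => PACNE.nashApr_nonneg (h.2 u)
  have hL1 : ∀ (h : NEApprox N A) (u : GameUtil N A), nashLoss h u ≤ 1 :=
    fun h u => PACNE.nashApr_le_one u.2 (h.2 u)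
  have hInt : ∀ (h : NEApprox N A), Measurable (nashLoss h) → Integrable (nashLoss h) D := by
    intro h hmeas
    refine Integrable.mono' (integrable_const 1) hmeas.aestronglyMeasurable
      (ae_of_all _ fun u => ?_)
    rw [Real.norm_eq_abs, abs_of_nonneg (hL0 h u)]
    exact hL1 h u
  -- closeness of losses for covered pairs
  have hclose : ∀ h ∈ H, ∀ g ∈ C, (∀ u, dist1 (h.1 u) (g.1 u) ≤ ε/12) →
      ∀ u, |nashLoss h u - nashLoss g u| ≤ ε/6 := by
    intro h _ g _ hd u
    calc |nashLoss h u - nashLoss g u| ≤ 2 * dist1 (h.1 u) (g.1 u) :=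
          PACNE.abs_nashApr_sub_le u.2 (h.2 u) (g.2 u)
      _ ≤ 2 * (ε/12) := by linarith [hd u]
      _ = ε/6 := by ring
  -- the bad event
  set Bad : Set (Fin m → GameUtil N A) :=
    {S | ∃ h ∈ H, |empRisk S h - trueRisk D h| > ε / 2} with hBad
  -- good event includes complement of bad
  have hGoodSub : Badᶜ ⊆ {S : Fin m → GameUtil N A | ∀ hS ∈ H,
      (∀ h ∈ H, empRisk S hS ≤ empRisk S h) →
        trueRisk D hS ≤ sInf (trueRisk D '' H) + ε} := by
    intro S hSc
    have hSc2 : ∀ h ∈ H, |empRisk S h - trueRisk D h| ≤ ε/2 := by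
      intro h hh
      by_contra hcon
      push_neg at hcon
      exact hSc ⟨h, hh, hcon⟩
    intro hS hSH hERM
    have hkey : ∀ h ∈ H, trueRisk D hS ≤ trueRisk D h + ε := by
      intro h hh
      have h1 := hSc2 hS hSH
      have h2 := hSc2 h hh
      have h3 := hERM h hh
      have h1' := (abs_le.1 h1).1
      have h2' := (abs_le.1 h2).2
      linarith
    have hlb : trueRisk D hS - ε ≤ sInf (trueRisk D '' H) := by
      apply le_csInf (hH.image _)
      rintro y ⟨h, hh, rfl⟩
      linarith [hkey h hh]
    linarith
  -- bad event union bound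
  have hBadSub : Bad ⊆ ⋃ g ∈ C, {S : Fin m → GameUtil N A |
      ε/6 ≤ |empRisk S g - trueRisk D g|} := by
    intro S hSBad
    obtain ⟨h, hh, habs⟩ := hSBad
    obtain ⟨g, hgC, hg⟩ := hcover h hh
    have hcl := hclose h hh g hgC hg
    have hemp : |empRisk S h - empRisk S g| ≤ ε/6 := by
      rw [empRisk, empRisk, ← mul_sub, ← Finset.sum_sub_distrib, abs_mul]
      rw [abs_of_pos (by positivity : (0:ℝ) < 1/(m:ℝ))]
      calc (1/(m:ℝ)) * |∑ j, (nashLoss h (S j) - nashLoss g (S j))|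
          ≤ (1/(m:ℝ)) * ∑ j, |nashLoss h (S j) - nashLoss g (S j)| := by
            apply mul_le_mul_of_nonneg_left (Finset.abs_sum_le_sum_abs _ _) (by positivity)
        _ ≤ (1/(m:ℝ)) * ∑ _j : Fin m, (ε/6) := by
            apply mul_le_mul_of_nonneg_left _ (by positivity)
            exact Finset.sum_le_sum fun j _ => hcl (S j)
        _ = ε/6 := by
            rw [Finset.sum_const, Finset.card_univ, Fintype.card_fin, nsmul_eq_mul]
            field_simp
    have htr : |trueRisk D h - trueRisk D g| ≤ ε/6 := by
      have hih := hInt h (hHmeas h hh)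
      have hig := hInt g (hCmeas g hgC)
      rw [trueRisk, trueRisk, ← integral_sub hih hig]
      calc |∫ u, (nashLoss h u - nashLoss g u) ∂D|
          ≤ ∫ u, |nashLoss h u - nashLoss g u| ∂D := by
            simpa [Real.norm_eq_abs] using norm_integral_le_integral_norm
              (μ := D) (f := fun u => nashLoss h u - nashLoss g u)
        _ ≤ ∫ _u, (ε/6 : ℝ) ∂D := integral_mono (hih.sub hig).abs (integrable_const _)
            (fun u => hcl u)
        _ = ε/6 := by simp
    refine Set.mem_biUnion hgC ?_
    simp only [Set.mem_setOf_eq]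
    have h4 : |empRisk S h - trueRisk D h| ≤ |empRisk S h - empRisk S g|
        + |empRisk S g - trueRisk D g| + |trueRisk D g - trueRisk D h| := by
      calc |empRisk S h - trueRisk D h|
          = |(empRisk S h - empRisk S g) + (empRisk S g - trueRisk D g)
              + (trueRisk D g - trueRisk D h)| := by ring_nf
        _ ≤ _ := abs_add_three _ _ _
    have h5 : |trueRisk D g - trueRisk D h| = |trueRisk D h - trueRisk D g| := abs_sub_comm _ _
    rw [h5] at h4
    linarith
  -- Hoeffding bound for each g in C
  have hBg : ∀ g ∈ C, μ {S : Fin m → GameUtil N A | ε/6 ≤ |empRisk S g - trueRisk D g|}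
      ≤ ENNReal.ofReal (2 * Real.exp (-2 * m * (ε/6) ^ 2)) := by
    intro g hgC
    have := PACNE.hoeffding_two_sided D (nashLoss g) (hCmeas g hgC) (hL0 g) (hL1 g) m hm1
      (ε/6) (by positivity)
    convert this using 2
    rfl
  -- measure of bad event
  have hBadBound : μ Bad ≤ ENNReal.ofReal δ := by
    have hsum : μ Bad ≤ ∑ g ∈ C, ENNReal.ofReal (2 * Real.exp (-2 * m * (ε/6) ^ 2)) := by
      calc μ Bad ≤ μ (⋃ g ∈ C, {S : Fin m → GameUtil N A |
            ε/6 ≤ |empRisk S g - trueRisk D g|}) := measure_mono hBadSub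
        _ ≤ ∑ g ∈ C, μ {S : Fin m → GameUtil N A | ε/6 ≤ |empRisk S g - trueRisk D g|} :=
            measure_biUnion_finset_le _ _
        _ ≤ _ := Finset.sum_le_sum hBg
    have hsum2 : (∑ _g ∈ C, ENNReal.ofReal (2 * Real.exp (-2 * m * (ε/6) ^ 2)))
        = ENNReal.ofReal ((K:ℝ) * (2 * Real.exp (-2 * m * (ε/6) ^ 2))) := by
      rw [Finset.sum_const, hK, nsmul_eq_mul, ← ENNReal.ofReal_natCast K,
        ← ENNReal.ofReal_mul (by positivity)]
    have hnum : (K:ℝ) * (2 * Real.exp (-2 * m * (ε/6) ^ 2)) ≤ δ := by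
      have hKpos : (0:ℝ) < K := by linarith
      have hstep : Real.log (2/δ) + Real.log K ≤ m * ε^2 / 18 := by
        have hmul := mul_le_mul_of_nonneg_left hm (le_of_lt (by positivity : (0:ℝ) < ε^2/18))
        have : ε^2/18 * (18 / ε ^ 2 * (Real.log (2/δ) + Real.log K))
            = Real.log (2/δ) + Real.log K := by
          field_simp
        rw [this] at hmul
        calc Real.log (2/δ) + Real.log K ≤ ε^2/18 * m := hmul
          _ = m * ε^2/18 := by ring
      have hexp : Real.exp (-2 * m * (ε/6) ^ 2) ≤ δ / 2 * (K:ℝ)⁻¹ := by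
        have he : (-2 : ℝ) * m * (ε/6) ^ 2 = -((m:ℝ) * ε^2/18) := by ring
        have h1 : Real.exp (-((m:ℝ) * ε^2/18))
            ≤ Real.exp (-(Real.log (2/δ) + Real.log K)) := by
          apply Real.exp_le_exp.2
          have : (m:ℝ) * ε^2/18 = (m:ℝ) * ε^2/18 := rfl
          linarith
        have h2 : Real.exp (-(Real.log (2/δ) + Real.log K)) = δ / 2 * (K:ℝ)⁻¹ := by
          rw [neg_add, Real.exp_add, Real.exp_neg, Real.exp_neg,
            Real.exp_log (by positivity : (0:ℝ) < 2/δ), Real.exp_log hKpos, inv_div]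
        rw [he]
        rw [h2] at h1
        exact h1
      calc (K:ℝ) * (2 * Real.exp (-2 * m * (ε/6) ^ 2))
          ≤ (K:ℝ) * (2 * (δ / 2 * (K:ℝ)⁻¹)) := by
            apply mul_le_mul_of_nonneg_left _ hKpos.le
            linarith
        _ = δ := by
            field_simp
    calc μ Bad ≤ _ := hsum
      _ = _ := hsum2
      _ ≤ ENNReal.ofReal δ := ENNReal.ofReal_le_ofReal hnum
  -- conclude
  calc ENNReal.ofReal (1 - δ) = 1 - ENNReal.ofReal δ := by
        rw [ENNReal.ofReal_sub _ hδ0.le, ENNReal.ofReal_one]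
    _ ≤ 1 - μ Bad := tsub_le_tsub_left hBadBound 1
    _ = μ Badᶜ := (prob_compl_eq_one_sub hsetmeas).symm
    _ ≤ _ := measure_mono hGoodSub
end

section
/- Let h be an L-Lipschitz NE approximator, i.e., ‖h(u) − h(v)‖₁ ≤ L·‖u − v‖max for all game utilities u, v ∈ U, with L > 0. Let ν, μ > 0, let u, v ∈ U be game utilities with ‖u − v‖max ≤ ν, and let π be a mixed strategy profile with ‖h(v) − π‖₁ ≤ μ. Then |NashApr(h(u), u) − NashApr(π, u)| ≤ 2·L·ν + 2·μ. -/
open Finset MeasureTheory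

section PerturbAux

set_option linter.unusedSectionVars false

variable {N : Type*} {A : N → Type*} [Fintype N] [DecidableEq N]
  [∀ i, Fintype (A i)] [∀ i, DecidableEq (A i)]

lemma pi_sum_prod' (g : ∀ j, A j → ℝ) :
    ∑ a : ∀ j, A j, ∏ j, g j (a j) = ∏ j, ∑ b, g j b :=
  (Fintype.prod_sum g).symm

lemma single_step' (τ : ∀ j, A j → ℝ) (hτ0 : ∀ j b, 0 ≤ τ j b) (hτ1 : ∀ j, ∑ b, τ j b = 1)
    (i : N) (p q : A i → ℝ) (f : (∀ j, A j) → ℝ) (hf : ∀ a, f a ∈ Set.Icc (0:ℝ) 1) :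
    |(∑ a : ∀ j, A j, (∏ j, Function.update τ i p j (a j)) * f a)
      - ∑ a : ∀ j, A j, (∏ j, Function.update τ i q j (a j)) * f a|
      ≤ ∑ b, |p b - q b| := by
  have hprod : ∀ (r : A i → ℝ) (a : ∀ j, A j),
      (∏ j, Function.update τ i r j (a j)) = r (a i) * ∏ j ∈ Finset.univ.erase i, τ j (a j) := by
    intro r a
    rw [← Finset.mul_prod_erase Finset.univ (fun j => Function.update τ i r j (a j))
      (Finset.mem_univ i)]
    simp only [Function.update_self]
    congr 1
    apply Finset.prod_congr rfl
    intro j hj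
    rw [Function.update_of_ne (Finset.ne_of_mem_erase hj)]
  rw [← Finset.sum_sub_distrib]
  calc |∑ a : ∀ j, A j, ((∏ j, Function.update τ i p j (a j)) * f a
        - (∏ j, Function.update τ i q j (a j)) * f a)|
      ≤ ∑ a : ∀ j, A j, |(∏ j, Function.update τ i p j (a j)) * f a
        - (∏ j, Function.update τ i q j (a j)) * f a| := Finset.abs_sum_le_sum_abs _ _
    _ ≤ ∑ a : ∀ j, A j, ∏ j, Function.update τ i (fun b => |p b - q b|) j (a j) := by
        apply Finset.sum_le_sum
        intro a _
        rw [hprod p, hprod q, hprod (fun b => |p b - q b|), ← sub_mul, ← sub_mul]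
        rw [abs_mul, abs_mul]
        have hP : 0 ≤ ∏ j ∈ Finset.univ.erase i, τ j (a j) :=
          Finset.prod_nonneg fun j _ => hτ0 j (a j)
        rw [abs_of_nonneg hP]
        have hfa := hf a
        have h1 : |f a| ≤ 1 := abs_le.mpr ⟨by linarith [hfa.1], hfa.2⟩
        calc |p (a i) - q (a i)| * (∏ j ∈ Finset.univ.erase i, τ j (a j)) * |f a|
            ≤ |p (a i) - q (a i)| * (∏ j ∈ Finset.univ.erase i, τ j (a j)) * 1 := by
              apply mul_le_mul_of_nonneg_left h1
              positivity
          _ = |p (a i) - q (a i)| * ∏ j ∈ Finset.univ.erase i, τ j (a j) := by ring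
    _ = ∏ j, ∑ b, Function.update τ i (fun b => |p b - q b|) j b := pi_sum_prod' _
    _ = ∑ b, |p b - q b| := by
        rw [← Finset.mul_prod_erase Finset.univ
          (fun j => ∑ b, Function.update τ i (fun b => |p b - q b|) j b) (Finset.mem_univ i)]
        simp only [Function.update_self]
        have : ∀ j ∈ Finset.univ.erase i,
            (∑ b, Function.update τ i (fun b => |p b - q b|) j b) = 1 := by
          intro j hj
          rw [show Function.update τ i (fun b => |p b - q b|) j = τ j from
            Function.update_of_ne (Finset.ne_of_mem_erase hj) _ _]
          exact hτ1 j
        rw [Finset.prod_congr rfl this]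
        simp

lemma expsum_diff' (σ π : ∀ i, A i → ℝ)
    (hσ : IsMixedProfile σ) (hπ : IsMixedProfile π)
    (f : (∀ j, A j) → ℝ) (hf : ∀ a, f a ∈ Set.Icc (0:ℝ) 1) :
    |(∑ a : ∀ j, A j, (∏ j, σ j (a j)) * f a)
      - ∑ a : ∀ j, A j, (∏ j, π j (a j)) * f a| ≤ dist1 σ π := by
  obtain ⟨hσ0, hσ1⟩ := hσ
  obtain ⟨hπ0, hπ1⟩ := hπ
  suffices h : ∀ s : Finset N,
      |(∑ a : ∀ j, A j, (∏ j, σ j (a j)) * f a)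
        - ∑ a : ∀ j, A j, (∏ j, (if j ∈ s then π j else σ j) (a j)) * f a|
        ≤ ∑ j ∈ s, ∑ b, |σ j b - π j b| by
    have := h Finset.univ
    simpa [dist1] using this
  intro s
  induction s using Finset.induction_on with
  | empty => simp
  | @insert i s his ih =>
    have hyb0 : ∀ j b, 0 ≤ (if j ∈ s then π j else σ j) b := by
      intro j b; by_cases hj : j ∈ s <;> simp [hj, hσ0 j b, hπ0 j b]
    have hyb1 : ∀ j, (∑ b, (if j ∈ s then π j else σ j) b) = 1 := by
      intro j; by_cases hj : j ∈ s <;> simp [hj, hσ1 j, hπ1 j]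
    have key : (fun j => if j ∈ insert i s then π j else σ j)
        = Function.update (fun j => if j ∈ s then π j else σ j) i (π i) := by
      funext j
      by_cases hj : j = i
      · subst hj; simp [Function.update_self]
      · rw [Function.update_of_ne hj]
        simp [Finset.mem_insert, hj]
    have hupd : (fun j => if j ∈ s then π j else σ j)
        = Function.update (fun j => if j ∈ s then π j else σ j) i (σ i) := by
      funext j
      by_cases hj : j = i
      · subst hj; simp [Function.update_self, his]
      · rw [Function.update_of_ne hj]
    have step := single_step' (fun j => if j ∈ s then π j else σ j) hyb0 hyb1 i (σ i) (π i) f hf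
    calc |(∑ a : ∀ j, A j, (∏ j, σ j (a j)) * f a)
          - ∑ a : ∀ j, A j, (∏ j, (if j ∈ insert i s then π j else σ j) (a j)) * f a|
        ≤ |(∑ a : ∀ j, A j, (∏ j, σ j (a j)) * f a)
            - ∑ a : ∀ j, A j, (∏ j, (if j ∈ s then π j else σ j) (a j)) * f a|
          + |(∑ a : ∀ j, A j, (∏ j, (if j ∈ s then π j else σ j) (a j)) * f a)
            - ∑ a : ∀ j, A j, (∏ j, (if j ∈ insert i s then π j else σ j) (a j)) * f a| :=
          abs_sub_le _ _ _
      _ ≤ (∑ j ∈ s, ∑ b, |σ j b - π j b|) + ∑ b, |σ i b - π i b| := by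
          apply add_le_add ih
          have e1 : (∑ a : ∀ j, A j, (∏ j, (if j ∈ s then π j else σ j) (a j)) * f a)
              = ∑ a : ∀ j, A j,
                (∏ j, Function.update (fun j => if j ∈ s then π j else σ j) i (σ i) j (a j)) * f a := by
            apply Finset.sum_congr rfl; intro a _; congr 1
            apply Finset.prod_congr rfl; intro j _
            rw [congrFun hupd j]
          have e2 : (∑ a : ∀ j, A j, (∏ j, (if j ∈ insert i s then π j else σ j) (a j)) * f a)
              = ∑ a : ∀ j, A j,
                (∏ j, Function.update (fun j => if j ∈ s then π j else σ j) i (π i) j (a j)) * f a := by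
            apply Finset.sum_congr rfl; intro a _; congr 1
            apply Finset.prod_congr rfl; intro j _
            rw [congrFun key j]
          rw [e1, e2]
          exact step
      _ = ∑ j ∈ insert i s, ∑ b, |σ j b - π j b| := by
          rw [Finset.sum_insert his]; ring

lemma expUtil_diff' (u : N → (∀ j, A j) → ℝ) (hu : ∀ i a, u i a ∈ Set.Icc (0:ℝ) 1) (i : N)
    (σ π : ∀ j, A j → ℝ) (hσ : IsMixedProfile σ) (hπ : IsMixedProfile π) :
    |expUtil u i σ - expUtil u i π| ≤ dist1 σ π :=
  expsum_diff' σ π hσ hπ (u i) (hu i)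

lemma update_pure_mixed (σ : ∀ j, A j → ℝ) (hσ : IsMixedProfile σ) (i : N) (b : A i) :
    IsMixedProfile (Function.update σ i (pureStrat b)) := by
  constructor
  · intro j c
    by_cases hj : j = i
    · subst hj; rw [Function.update_self]; unfold pureStrat; positivity
    · rw [Function.update_of_ne hj]; exact hσ.1 j c
  · intro j
    by_cases hj : j = i
    · subst hj; rw [Function.update_self]; simp [pureStrat]
    · rw [Function.update_of_ne hj]; exact hσ.2 j

lemma dist1_update_le (σ π : ∀ j, A j → ℝ) (i : N) (p : A i → ℝ) :
    dist1 (Function.update σ i p) (Function.update π i p) ≤ dist1 σ π := by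
  unfold dist1
  apply Finset.sum_le_sum
  intro j _
  by_cases hj : j = i
  · subst hj
    simp only [Function.update_self, sub_self, abs_zero, Finset.sum_const_zero]
    positivity
  · rw [Function.update_of_ne hj, Function.update_of_ne hj]

lemma sup'_le_sup'_add {α : Type*} (s : Finset α) (hs : s.Nonempty) (f g : α → ℝ) (c : ℝ)
    (h : ∀ x ∈ s, f x ≤ g x + c) : s.sup' hs f ≤ s.sup' hs g + c :=
  Finset.sup'_le _ _ fun x hx => (h x hx).trans (add_le_add_left (Finset.le_sup' g hx) c)

lemma nashApr_le_add [Nonempty N] [∀ i, Nonempty (A i)]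
    (σ π : ∀ j, A j → ℝ) (hσ : IsMixedProfile σ) (hπ : IsMixedProfile π)
    (u : N → (∀ j, A j) → ℝ) (hu : ∀ i a, u i a ∈ Set.Icc (0:ℝ) 1) :
    nashApr σ u ≤ nashApr π u + 2 * dist1 σ π := by
  unfold nashApr
  apply sup'_le_sup'_add
  intro i _
  apply sup'_le_sup'_add
  intro b _
  have h1 := expUtil_diff' u hu i (Function.update σ i (pureStrat b))
    (Function.update π i (pureStrat b)) (update_pure_mixed σ hσ i b) (update_pure_mixed π hπ i b)
  have h2 := expUtil_diff' u hu i σ π hσ hπ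
  have h3 := dist1_update_le σ π i (pureStrat b)
  rw [abs_le] at h1 h2
  have := h1.2
  have := h2.1
  linarith

lemma nashApr_abs_diff [Nonempty N] [∀ i, Nonempty (A i)]
    (σ π : ∀ j, A j → ℝ) (hσ : IsMixedProfile σ) (hπ : IsMixedProfile π)
    (u : N → (∀ j, A j) → ℝ) (hu : ∀ i a, u i a ∈ Set.Icc (0:ℝ) 1) :
    |nashApr σ u - nashApr π u| ≤ 2 * dist1 σ π := by
  have hsymm : dist1 π σ = dist1 σ π := by
    unfold dist1
    apply Finset.sum_congr rfl; intro j _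
    apply Finset.sum_congr rfl; intro a _
    exact abs_sub_comm _ _
  rw [abs_sub_le_iff]
  constructor
  · linarith [nashApr_le_add σ π hσ hπ u hu]
  · have := nashApr_le_add π σ hπ hσ u hu
    rw [hsymm] at this
    linarith

lemma dist1_triangle' (x y z : ∀ j, A j → ℝ) : dist1 x z ≤ dist1 x y + dist1 y z := by
  unfold dist1
  rw [← Finset.sum_add_distrib]
  apply Finset.sum_le_sum
  intro j _
  rw [← Finset.sum_add_distrib]
  apply Finset.sum_le_sum
  intro a _
  exact abs_sub_le _ _ _

end PerturbAux

theorem lipschitz_approximator_perturbation_bound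
    {N : Type*} [Fintype N] [DecidableEq N] [Nonempty N]
    {A : N → Type*} [∀ i, Fintype (A i)] [∀ i, DecidableEq (A i)] [∀ i, Nonempty (A i)]
    (h : NEApprox N A) (L : ℝ) (hL : 0 < L)
    (hlip : ∀ u v : GameUtil N A, dist1 (h.1 u) (h.1 v) ≤ L * distMax u.1 v.1)
    (ν μ : ℝ) (hν : 0 < ν) (hμ : 0 < μ)
    (u v : GameUtil N A) (huv : distMax u.1 v.1 ≤ ν)
    (π : ∀ i, A i → ℝ) (hπ : IsMixedProfile π) (hπclose : dist1 (h.1 v) π ≤ μ) :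
    |nashApr (h.1 u) u.1 - nashApr π u.1| ≤ 2 * L * ν + 2 * μ := by
  have hhu := h.2 u
  have hd : dist1 (h.1 u) π ≤ L * ν + μ := by
    have t1 := dist1_triangle' (h.1 u) (h.1 v) π
    have t2 := hlip u v
    have t3 : L * distMax u.1 v.1 ≤ L * ν := mul_le_mul_of_nonneg_left huv hL.le
    linarith
  have hmain := nashApr_abs_diff (h.1 u) π hhu hπ u.1 u.2
  have hfin : 2 * dist1 (h.1 u) π ≤ 2 * (L * ν + μ) := by linarith
  calc |nashApr (h.1 u) u.1 - nashApr π u.1| ≤ 2 * dist1 (h.1 u) π := hmain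
    _ ≤ 2 * (L * ν + μ) := hfin
    _ = 2 * L * ν + 2 * μ := by ring
end

section
/- Covering number of a Lipschitz hypothesis class: Let each action set satisfy |A_i| ≥ 2, write d = Σ_{i∈N} |A|·1 summed over players so that game utilities are points of [0,1]^{n·|A|} where n = |N| and |A| = ∏_{i∈N} |A_i|. Let H be a set of NE approximators that is L-Lipschitz, i.e., for some constant L > 0 every h ∈ H satisfies ‖h(u) − h(v)‖₁ ≤ L·‖u − v‖max for all u, v ∈ U. Then for every r with 0 < r < 4 there exists a finite set C of NE approximators that r-covers H whose cardinality satisfies ln |C| ≤ ⌈4L/r⌉^{n·|A|} · Σ_{i∈N} (|A_i| − 1) · ln( (40·e·n·|A_i|/r + e·|A_i|) / (|A_i| − 1) ). In particular, the r-covering number N_{∞,1}(H, r), defined as the minimal cardinality of a set of NE approximators that r-covers H, is bounded by this quantity. -/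
open Finset MeasureTheory

section AuxCover

lemma my_round_simplex {k : Type*} [Fintype k] [DecidableEq k] [Nonempty k]
    (M : ℕ) (hM : 0 < M) (p : k → ℝ) (hp0 : ∀ a, 0 ≤ p a) (hp1 : ∑ a, p a = 1) :
    ∃ m : k → ℕ, (∑ a, m a = M) ∧ (∀ a, m a ≤ M) ∧
      ∑ a, |p a - (m a : ℝ) / M| ≤ 2 * (Fintype.card k) / M := by
  have hMR : (0:ℝ) < M := by exact_mod_cast hM
  obtain ⟨a0⟩ := ‹Nonempty k›
  set s : ℕ := ∑ b ∈ univ.erase a0, ⌊p b * M⌋₊ with hs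
  -- error terms
  set e : k → ℝ := fun b => p b - (⌊p b * M⌋₊ : ℝ) / M with he
  have he0 : ∀ b, 0 ≤ e b := by
    intro b
    have := Nat.floor_le (mul_nonneg (hp0 b) hMR.le)
    simp only [he]
    rw [sub_nonneg, div_le_iff₀ hMR]
    exact this
  have he1 : ∀ b, e b ≤ 1 / M := by
    intro b
    have := Nat.lt_floor_add_one (p b * M)
    simp only [he]
    rw [sub_le_iff_le_add, ← add_div, le_div_iff₀ hMR]
    linarith
  have hp_le : ∀ a : k, p a ≤ 1 := by
    intro a
    calc p a ≤ ∑ b, p b := Finset.single_le_sum (fun b _ => hp0 b) (mem_univ a)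
    _ = 1 := hp1
  have hsum_erase : ∑ b ∈ univ.erase a0, p b = 1 - p a0 := by
    have := Finset.add_sum_erase univ p (mem_univ a0)
    linarith [this.symm ▸ hp1]
  have hsR : (s:ℝ) ≤ M := by
    have h1 : (s:ℝ) = ∑ b ∈ univ.erase a0, ((⌊p b * M⌋₊ : ℕ):ℝ) := by push_cast [hs]; ring
    have h2 : ∀ b ∈ univ.erase a0, ((⌊p b * M⌋₊ : ℕ):ℝ) ≤ p b * M := fun b _ =>
      Nat.floor_le (mul_nonneg (hp0 b) hMR.le)
    calc (s:ℝ) ≤ ∑ b ∈ univ.erase a0, p b * M := h1 ▸ Finset.sum_le_sum h2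
    _ = (1 - p a0) * M := by rw [← Finset.sum_mul, hsum_erase]
    _ ≤ 1 * M := by nlinarith [hp0 a0]
    _ = M := one_mul _
  have hsM : s ≤ M := by exact_mod_cast hsR
  refine ⟨fun a => if a = a0 then M - s else ⌊p a * M⌋₊, ?_, ?_, ?_⟩
  · rw [← Finset.add_sum_erase univ _ (mem_univ a0)]
    rw [if_pos rfl]
    have : ∑ b ∈ univ.erase a0, (if b = a0 then M - s else ⌊p b * M⌋₊) = s := by
      apply Finset.sum_congr rfl
      intro b hb
      rw [if_neg (Finset.ne_of_mem_erase hb)]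
    rw [this]; omega
  · intro a
    by_cases h : a = a0
    · simp only [if_pos h]; omega
    · simp only [if_neg h]
      have : p a * M ≤ M := by nlinarith [hp_le a, hp0 a]
      calc ⌊p a * M⌋₊ ≤ ⌊(M:ℝ)⌋₊ := Nat.floor_le_floor this
      _ = M := Nat.floor_natCast M
  · rw [← Finset.add_sum_erase univ _ (mem_univ a0)]
    have hterm : ∀ b ∈ univ.erase a0,
        |p b - ((if b = a0 then M - s else ⌊p b * M⌋₊ : ℕ) : ℝ) / M| = e b := by
      intro b hb
      rw [if_neg (Finset.ne_of_mem_erase hb), abs_of_nonneg (he0 b)]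
    have ha0 : |p a0 - (((M - s : ℕ)) : ℝ) / M| = ∑ b ∈ univ.erase a0, e b := by
      have hcast : ((M - s : ℕ) : ℝ) = (M:ℝ) - s := by
        rw [Nat.cast_sub hsM]
      have hsum_e : ∑ b ∈ univ.erase a0, e b = (1 - p a0) - (s:ℝ)/M := by
        simp only [he, Finset.sum_sub_distrib, hsum_erase, ← Finset.sum_div]
        push_cast [hs]
        ring_nf
        simp only [mul_comm]
      have hval : p a0 - ((M - s : ℕ) : ℝ) / M = -(∑ b ∈ univ.erase a0, e b) := by
        rw [hcast, hsum_e]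
        field_simp
        ring
      rw [hval, abs_neg, abs_of_nonneg (Finset.sum_nonneg fun b _ => he0 b)]
    beta_reduce
    rw [if_pos rfl, ha0, Finset.sum_congr rfl hterm]
    have hbound : ∑ b ∈ univ.erase a0, e b ≤ (Fintype.card k : ℝ) * (1/M) := by
      calc ∑ b ∈ univ.erase a0, e b ≤ ∑ b ∈ univ.erase a0, (1/M : ℝ) :=
        Finset.sum_le_sum fun b _ => he1 b
      _ = (univ.erase a0).card * (1/M : ℝ) := by rw [Finset.sum_const, nsmul_eq_mul]
      _ ≤ (Fintype.card k : ℝ) * (1/M) := by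
        apply mul_le_mul_of_nonneg_right _ (by positivity)
        exact_mod_cast Finset.card_le_card (Finset.erase_subset _ _) |>.trans (le_of_eq (Finset.card_univ))
    calc _ ≤ (Fintype.card k : ℝ) * (1/M) + (Fintype.card k : ℝ) * (1/M) := by linarith
    _ = 2 * (Fintype.card k : ℝ) / M := by ring


lemma my_multiset_card_sum {k : Type*} (s : Finset k) (f : k → Multiset k) :
    (∑ a ∈ s, f a).card = ∑ a ∈ s, (f a).card := by
  induction s using Finset.cons_induction with
  | empty => simp
  | cons a s ha ih => simp [Finset.sum_cons, ih]

lemma my_card_net {k : Type*} [Fintype k] [DecidableEq k] (M : ℕ) :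
    (Finset.univ.filter (fun m : k → Fin (M+1) => ∑ a, (m a : ℕ) = M)).card
      ≤ (Fintype.card k + M - 1).choose M := by
  classical
  rw [← Sym.card_sym_eq_choose (α := k) M, ← Finset.card_univ]
  have key : ∀ (m : k → Fin (M+1)) (a : k),
      Multiset.count a (∑ b : k, Multiset.replicate ((m b : ℕ)) b) = (m a : ℕ) := by
    intro m a
    rw [Multiset.count_sum']
    simp only [Multiset.count_replicate]
    rw [Finset.sum_ite_eq' univ a (fun b => ((m b : ℕ)))]
    simp
  calc (Finset.univ.filter (fun m : k → Fin (M+1) => ∑ a, (m a : ℕ) = M)).card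
      ≤ ((Finset.univ : Finset (Sym k M)).image (fun x : Sym k M => x.1)).card := by
        apply Finset.card_le_card_of_injOn (fun m => ∑ b : k, Multiset.replicate ((m b : ℕ)) b)
        · intro m hm
          rw [Finset.mem_coe, Finset.mem_filter] at hm
          rw [Finset.mem_coe]
          apply Finset.mem_image.2
          refine ⟨⟨∑ b : k, Multiset.replicate ((m b : ℕ)) b, ?_⟩, Finset.mem_univ _, rfl⟩
          rw [my_multiset_card_sum]
          simpa only [Multiset.card_replicate] using hm.2
        · intro m₁ _ m₂ _ hEq
          funext a
          have := congrArg (Multiset.count a) hEq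
          rw [key m₁ a, key m₂ a] at this
          exact Fin.ext this
  _ ≤ (Finset.univ : Finset (Sym k M)).card := Finset.card_image_le

lemma my_choose_le {d n : ℕ} (hd : 1 ≤ d) :
    ((n.choose d : ℕ) : ℝ) ≤ (Real.exp 1 * n / d) ^ d := by
  have hdR : (0:ℝ) < d := by exact_mod_cast hd
  have h1 : ((n.choose d : ℕ) : ℝ) ≤ (n:ℝ) ^ d / (Nat.factorial d : ℝ) := by
    exact_mod_cast Nat.choose_le_pow_div d n (α := ℝ)
  have h2 : (d:ℝ) ^ d / (Nat.factorial d : ℝ) ≤ Real.exp 1 ^ d := by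
    rw [Real.exp_one_pow]
    exact Real.pow_div_factorial_le_exp (x := (d:ℝ)) (by positivity) d
  have hfac : (0:ℝ) < (Nat.factorial d : ℝ) := by exact_mod_cast d.factorial_pos
  have h3 : (d:ℝ) ^ d / Real.exp 1 ^ d ≤ (Nat.factorial d : ℝ) := by
    rw [div_le_iff₀ (by positivity)] at h2 ⊢
    linarith [h2]
  calc ((n.choose d : ℕ) : ℝ) ≤ (n:ℝ) ^ d / (Nat.factorial d : ℝ) := h1
  _ ≤ (n:ℝ) ^ d / ((d:ℝ) ^ d / Real.exp 1 ^ d) := by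
      apply div_le_div_of_nonneg_left (by positivity) (by positivity) h3
  _ = (Real.exp 1 * n / d) ^ d := by
      rw [div_pow, mul_pow]
      field_simp

lemma my_dist1_triangle {N : Type*} {A : N → Type*} [Fintype N] [∀ i, Fintype (A i)]
    (σ τ ρ : ∀ i, A i → ℝ) : dist1 σ ρ ≤ dist1 σ τ + dist1 τ ρ := by
  unfold dist1
  rw [← Finset.sum_add_distrib]
  refine Finset.sum_le_sum fun i _ => ?_
  rw [← Finset.sum_add_distrib]
  exact Finset.sum_le_sum fun a _ => abs_sub_le _ _ _

end AuxCover

theorem lipschitz_class_covering_number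
    {N : Type*} [Fintype N] [DecidableEq N] [Nonempty N]
    {A : N → Type*} [∀ i, Fintype (A i)] [∀ i, DecidableEq (A i)] [∀ i, Nonempty (A i)]
    (hA : ∀ i, 2 ≤ Fintype.card (A i))
    (H : Set (NEApprox N A)) (L : ℝ) (hL : 0 < L)
    (hlip : ∀ h ∈ H, ∀ u v : GameUtil N A, dist1 (h.1 u) (h.1 v) ≤ L * distMax u.1 v.1)
    (r : ℝ) (hr : 0 < r) (hr4 : r < 4) :
    ∃ C : Finset (NEApprox N A), Covers r C H ∧
      Real.log C.card ≤
        (⌈4 * L / r⌉₊ : ℝ) ^ (Fintype.card N * Fintype.card (∀ i, A i)) *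
          ∑ i : N, ((Fintype.card (A i) : ℝ) - 1) *
            Real.log
              ((40 * Real.exp 1 * (Fintype.card N : ℝ) * (Fintype.card (A i) : ℝ) / r +
                  Real.exp 1 * (Fintype.card (A i) : ℝ)) /
                ((Fintype.card (A i) : ℝ) - 1)) := by
  classical
  have hnN : 0 < Fintype.card N := Fintype.card_pos
  have hnR : (0:ℝ) < Fintype.card N := by exact_mod_cast hnN
  have hkA : ∀ i, (2:ℝ) ≤ (Fintype.card (A i) : ℝ) := fun i => by exact_mod_cast hA i
  have hkpos : ∀ i, (0:ℝ) < (Fintype.card (A i) : ℝ) := fun i => lt_of_lt_of_le two_pos (hkA i)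
  -- utility grid resolution
  set M0 : ℕ := ⌈4 * L / r⌉₊ with hM0def
  have hM0 : 0 < M0 := Nat.ceil_pos.2 (by positivity)
  have hM0R : (0:ℝ) < (M0:ℝ) := by exact_mod_cast hM0
  have hM0ge : 4 * L / r ≤ (M0:ℝ) := Nat.le_ceil _
  -- per-player simplex resolution
  set Mi : N → ℕ := fun i => ⌈4 * (Fintype.card N : ℝ) * (Fintype.card (A i) : ℝ) / r⌉₊
    with hMidef
  have hMi : ∀ i, 0 < Mi i := fun i => Nat.ceil_pos.2 (by positivity)
  have hMiR : ∀ i, (0:ℝ) < (Mi i : ℝ) := fun i => by exact_mod_cast hMi i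
  have hMige : ∀ i, 4 * (Fintype.card N : ℝ) * (Fintype.card (A i) : ℝ) / r ≤ (Mi i : ℝ) :=
    fun i => Nat.le_ceil _
  have hMile : ∀ i, (Mi i : ℝ) ≤ 4 * (Fintype.card N : ℝ) * (Fintype.card (A i) : ℝ) / r + 1 :=
    fun i => le_of_lt (Nat.ceil_lt_add_one (by positivity))
  -- the per-player nets
  set S : ∀ i, Finset (A i → Fin (Mi i + 1)) :=
    fun i => Finset.univ.filter (fun m => ∑ a, (m a : ℕ) = Mi i) with hSdef
  set Net : ∀ i, Finset (A i → ℝ) :=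
    fun i => (S i).image (fun m a => ((m a : ℕ) : ℝ) / (Mi i : ℝ)) with hNetdef
  have hNetProp : ∀ i, ∀ q ∈ Net i, (∀ a, 0 ≤ q a) ∧ ∑ a, q a = 1 := by
    intro i q hq
    simp only [hNetdef, Finset.mem_image, hSdef, Finset.mem_filter] at hq
    obtain ⟨m, ⟨-, hm⟩, rfl⟩ := hq
    refine ⟨fun a => by positivity, ?_⟩
    rw [← Finset.sum_div]
    rw [show (∑ a, ((m a : ℕ):ℝ)) = ((Mi i : ℕ):ℝ) by exact_mod_cast congrArg Nat.cast hm]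
    exact div_self (ne_of_gt (hMiR i))
  have hNetNe : ∀ i, (Net i).Nonempty := by
    intro i
    have a0 : A i := Classical.arbitrary _
    refine ⟨_, Finset.mem_image_of_mem _ (Finset.mem_filter.2
      ⟨Finset.mem_univ (fun a => if a = a0 then (⟨Mi i, Nat.lt_succ_self _⟩ : Fin (Mi i + 1))
        else ⟨0, Nat.succ_pos _⟩), ?_⟩)⟩
    simp [apply_ite (fun x : Fin (Mi i + 1) => (x : ℕ)), Finset.sum_ite_eq']
  set ProfNet : Finset (∀ i, A i → ℝ) := Fintype.piFinset Net with hPNdef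
  have hProfMixed : ∀ q ∈ ProfNet, IsMixedProfile q := by
    intro q hq
    rw [hPNdef, Fintype.mem_piFinset] at hq
    exact ⟨fun i => (hNetProp i _ (hq i)).1, fun i => (hNetProp i _ (hq i)).2⟩
  -- quantization of utilities
  set ι : GameUtil N A → ((N × (∀ i, A i)) → Fin M0) :=
    fun u p => ⟨min ⌊u.1 p.1 p.2 * (M0:ℝ)⌋₊ (M0 - 1), by omega⟩ with hιdef
  set rep : ((N × (∀ i, A i)) → Fin M0) → GameUtil N A :=
    fun γ => ⟨fun i a => ((γ (i, a) : ℕ) : ℝ) / (M0:ℝ), by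
      intro i a
      constructor
      · positivity
      · rw [div_le_one hM0R]
        exact_mod_cast le_of_lt (γ (i, a)).2⟩ with hrepdef
  have hquant : ∀ u : GameUtil N A, ∀ i a, |u.1 i a - (rep (ι u)).1 i a| ≤ 1 / (M0:ℝ) := by
    intro u i a
    have hx0 : 0 ≤ u.1 i a := (u.2 i a).1
    have hx1 : u.1 i a ≤ 1 := (u.2 i a).2
    set x := u.1 i a
    set f' : ℕ := min ⌊x * (M0:ℝ)⌋₊ (M0 - 1) with hf'def
    have hval : (rep (ι u)).1 i a = (f' : ℝ) / (M0:ℝ) := rfl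
    have h1 : (f' : ℝ) ≤ x * (M0:ℝ) := by
      calc (f' : ℝ) ≤ (⌊x * (M0:ℝ)⌋₊ : ℝ) := by exact_mod_cast Nat.min_le_left _ _
      _ ≤ x * (M0:ℝ) := Nat.floor_le (by positivity)
    have h2 : x * (M0:ℝ) ≤ (f' : ℝ) + 1 := by
      by_cases hf : ⌊x * (M0:ℝ)⌋₊ ≤ M0 - 1
      · have : f' = ⌊x * (M0:ℝ)⌋₊ := min_eq_left hf
        rw [this]
        exact le_of_lt (Nat.lt_floor_add_one _)
      · have hmin : f' = M0 - 1 := min_eq_right (le_of_lt (lt_of_not_ge hf))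
        have : ((M0 - 1 : ℕ) : ℝ) + 1 = (M0:ℝ) := by
          have : 1 ≤ M0 := hM0
          push_cast [Nat.cast_sub this]
          ring
        rw [hmin, this]
        nlinarith
    have hxf : (f' : ℝ) / (M0:ℝ) ≤ x := by rw [div_le_iff₀ hM0R]; exact h1
    have hxf2 : x - (f' : ℝ) / (M0:ℝ) ≤ 1 / (M0:ℝ) := by
      rw [sub_le_iff_le_add, ← add_div, le_div_iff₀ hM0R]
      linarith
    rw [hval, abs_of_nonneg (by linarith)]
    exact hxf2
  -- default profile
  set δ : ∀ i, A i → ℝ := fun i a => if a = Classical.arbitrary (A i) then (1:ℝ) else 0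
    with hδdef
  have hδmixed : IsMixedProfile δ := by
    refine ⟨fun i a => by by_cases hc : a = Classical.arbitrary (A i) <;> simp [hδdef, hc], fun i => ?_⟩
    simp [hδdef, Finset.sum_ite_eq']
  -- the approximators
  set toF : (((N × (∀ i, A i)) → Fin M0) → ∀ i, A i → ℝ) → NEApprox N A :=
    fun f => ⟨fun u => if IsMixedProfile (f (ι u)) then f (ι u) else δ, by
      intro u
      beta_reduce
      split
      · assumption
      · exact hδmixed⟩ with htoFdef
  set C : Finset (NEApprox N A) :=
    (Fintype.piFinset (fun _ : (N × (∀ i, A i)) → Fin M0 => ProfNet)).image toF with hCdef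
  refine ⟨C, ?_, ?_⟩
  · -- covering
    intro h hH
    have hmix := h.2
    have hround : ∀ (γ : (N × (∀ i, A i)) → Fin M0) (i : N), ∃ m : A i → ℕ,
        (∑ a, m a = Mi i) ∧ (∀ a, m a ≤ Mi i) ∧
        ∑ a, |h.1 (rep γ) i a - (m a : ℝ) / (Mi i : ℝ)| ≤
          2 * (Fintype.card (A i) : ℝ) / (Mi i : ℝ) :=
      fun γ i => my_round_simplex (Mi i) (hMi i) (h.1 (rep γ) i)
        (fun a => (hmix (rep γ)).1 i a) ((hmix (rep γ)).2 i)
    choose m hm1 hm2 hm3 using hround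
    set f : ((N × (∀ i, A i)) → Fin M0) → ∀ i, A i → ℝ :=
      fun γ i a => ((m γ i a : ℕ) : ℝ) / (Mi i : ℝ) with hfdef
    have hfNet : ∀ γ i, f γ i ∈ Net i := by
      intro γ i
      rw [hNetdef]
      refine Finset.mem_image.2 ⟨fun a => ⟨m γ i a, by have := hm2 γ i a; omega⟩, ?_, rfl⟩
      rw [hSdef]
      refine Finset.mem_filter.2 ⟨Finset.mem_univ _, ?_⟩
      simpa using hm1 γ i
    have hfP : f ∈ Fintype.piFinset (fun _ : (N × (∀ i, A i)) → Fin M0 => ProfNet) :=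
      Fintype.mem_piFinset.2 fun γ => Fintype.mem_piFinset.2 fun i => hfNet γ i
    refine ⟨toF f, Finset.mem_image_of_mem _ hfP, ?_⟩
    intro u
    have hfm : IsMixedProfile (f (ι u)) :=
      hProfMixed _ (Fintype.mem_piFinset.2 fun i => hfNet (ι u) i)
    have hgu : (toF f).1 u = f (ι u) := if_pos hfm
    rw [hgu]
    have htri : dist1 (h.1 u) (f (ι u)) ≤
        dist1 (h.1 u) (h.1 (rep (ι u))) + dist1 (h.1 (rep (ι u))) (f (ι u)) :=
      my_dist1_triangle _ _ _
    have hlip1 : dist1 (h.1 u) (h.1 (rep (ι u))) ≤ r / 4 := by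
      have hd : distMax u.1 (rep (ι u)).1 ≤ 1 / (M0:ℝ) := by
        apply Finset.sup'_le
        intro i _
        apply Finset.sup'_le
        intro a _
        exact hquant u i a
      have hL1 : L * (1 / (M0:ℝ)) ≤ r / 4 := by
        rw [mul_one_div, div_le_div_iff₀ hM0R (by norm_num : (0:ℝ) < 4)]
        rw [div_le_iff₀ hr] at hM0ge
        linarith
      calc dist1 (h.1 u) (h.1 (rep (ι u))) ≤ L * distMax u.1 (rep (ι u)).1 :=
            hlip h hH u (rep (ι u))
      _ ≤ L * (1 / (M0:ℝ)) := by
            apply mul_le_mul_of_nonneg_left hd (le_of_lt hL)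
      _ ≤ r / 4 := hL1
    have hnet1 : dist1 (h.1 (rep (ι u))) (f (ι u)) ≤ r / 2 := by
      have hterm : ∀ i : N, ∑ a, |h.1 (rep (ι u)) i a - f (ι u) i a| ≤
          r / (2 * (Fintype.card N : ℝ)) := by
        intro i
        refine le_trans (hm3 (ι u) i) ?_
        have hMige' := hMige i
        have h4nk : (0:ℝ) < 4 * (Fintype.card N : ℝ) * (Fintype.card (A i) : ℝ) / r :=
          by positivity
        calc 2 * (Fintype.card (A i) : ℝ) / (Mi i : ℝ)
            ≤ 2 * (Fintype.card (A i) : ℝ) /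
              (4 * (Fintype.card N : ℝ) * (Fintype.card (A i) : ℝ) / r) :=
              div_le_div_of_nonneg_left (by positivity) h4nk hMige'
        _ = r / (2 * (Fintype.card N : ℝ)) := by
              field_simp
              ring
      calc dist1 (h.1 (rep (ι u))) (f (ι u))
          = ∑ i, ∑ a, |h.1 (rep (ι u)) i a - f (ι u) i a| := rfl
      _ ≤ ∑ _i : N, r / (2 * (Fintype.card N : ℝ)) := Finset.sum_le_sum fun i _ => hterm i
      _ = (Fintype.card N : ℝ) * (r / (2 * (Fintype.card N : ℝ))) := by
            rw [Finset.sum_const, nsmul_eq_mul, Finset.card_univ]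
      _ = r / 2 := by field_simp
    linarith
  · -- cardinality bound
    have hNetCard : ∀ i, Real.log ((Net i).card : ℝ) ≤
        ((Fintype.card (A i) : ℝ) - 1) *
          Real.log ((40 * Real.exp 1 * (Fintype.card N : ℝ) * (Fintype.card (A i) : ℝ) / r +
            Real.exp 1 * (Fintype.card (A i) : ℝ)) / ((Fintype.card (A i) : ℝ) - 1)) := by
      intro i
      set k : ℕ := Fintype.card (A i) with hkdef
      set d : ℕ := k - 1 with hddef
      have hk2 : 2 ≤ k := hA i
      have hd1 : 1 ≤ d := by omega
      have hdR : (d:ℝ) = (k:ℝ) - 1 := by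
        rw [hddef]
        push_cast [Nat.cast_sub (by omega : 1 ≤ k)]
        ring
      have hdRpos : (0:ℝ) < (d:ℝ) := by rw [hdR]; linarith [hkA i]
      have hc1 : ((Net i).card : ℝ) ≤ (((Mi i + k - 1).choose d : ℕ) : ℝ) := by
        have step1 : (Net i).card ≤ (S i).card := Finset.card_image_le
        have step2 : (S i).card ≤ (k + Mi i - 1).choose (Mi i) := my_card_net (Mi i)
        have step3 : (k + Mi i - 1).choose (Mi i) = (Mi i + k - 1).choose d := by
          have hsymm := Nat.choose_symm (show Mi i ≤ k + Mi i - 1 by omega)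
          rw [show k + Mi i - 1 - Mi i = d by omega] at hsymm
          rw [← hsymm, show Mi i + k - 1 = k + Mi i - 1 by omega]
        exact_mod_cast le_trans step1 (step3 ▸ step2)
      have hc2 : (((Mi i + k - 1).choose d : ℕ) : ℝ) ≤
          (Real.exp 1 * ((Mi i + k - 1 : ℕ):ℝ) / (d:ℝ)) ^ d := my_choose_le hd1
      set arg : ℝ := (40 * Real.exp 1 * (Fintype.card N : ℝ) * (k:ℝ) / r +
        Real.exp 1 * (k:ℝ)) / ((k:ℝ) - 1) with hargdef
      have hbase : Real.exp 1 * ((Mi i + k - 1 : ℕ):ℝ) / (d:ℝ) ≤ arg := by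
        have hcast : ((Mi i + k - 1 : ℕ):ℝ) = (Mi i : ℝ) + (k:ℝ) - 1 := by
          rw [show Mi i + k - 1 = Mi i + (k - 1) by omega]
          push_cast [Nat.cast_sub (by omega : 1 ≤ k)]
          ring
        rw [hcast, hdR, hargdef]
        rw [div_le_div_iff₀ (by linarith [hkA i]) (by linarith [hkA i])]
        have he := Real.exp_pos 1
        have hMile' := hMile i
        have hexp : Real.exp 1 * ((Mi i : ℝ) + (k:ℝ) - 1) ≤
            40 * Real.exp 1 * (Fintype.card N : ℝ) * (k:ℝ) / r + Real.exp 1 * (k:ℝ) := by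
          have h1 : Real.exp 1 * ((Mi i : ℝ) + (k:ℝ) - 1) ≤
              Real.exp 1 * (4 * (Fintype.card N : ℝ) * (k:ℝ) / r + (k:ℝ)) := by
            apply mul_le_mul_of_nonneg_left _ (le_of_lt he)
            linarith
          have h2 : Real.exp 1 * (4 * (Fintype.card N : ℝ) * (k:ℝ) / r + (k:ℝ)) =
              4 * Real.exp 1 * (Fintype.card N : ℝ) * (k:ℝ) / r + Real.exp 1 * (k:ℝ) := by
            field_simp
          have h4 : 4 * Real.exp 1 * (Fintype.card N : ℝ) * (k:ℝ) / r ≤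
              40 * Real.exp 1 * (Fintype.card N : ℝ) * (k:ℝ) / r := by
            have h3 : (0:ℝ) ≤ Real.exp 1 * (Fintype.card N : ℝ) * (k:ℝ) / r := by positivity
            have h5 : 4 * Real.exp 1 * (Fintype.card N : ℝ) * (k:ℝ) / r +
                36 * (Real.exp 1 * (Fintype.card N : ℝ) * (k:ℝ) / r) =
                40 * Real.exp 1 * (Fintype.card N : ℝ) * (k:ℝ) / r := by ring
            linarith
          linarith
        exact mul_le_mul_of_nonneg_right hexp (by linarith [hkA i])
      have hargpos : 0 < arg := by
        rw [hargdef]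
        apply div_pos (by positivity) (by linarith [hkA i])
      have hNetpos : (0:ℝ) < ((Net i).card : ℝ) := by
        exact_mod_cast Finset.Nonempty.card_pos (hNetNe i)
      calc Real.log ((Net i).card : ℝ) ≤ Real.log (arg ^ d) := by
            apply Real.log_le_log hNetpos
            refine le_trans hc1 (le_trans hc2 ?_)
            exact pow_le_pow_left₀ (by positivity) hbase d
      _ = (d:ℝ) * Real.log arg := by rw [Real.log_pow]
      _ = ((k:ℝ) - 1) * Real.log arg := by rw [hdR]
    -- assemble
    have hGcard : Fintype.card ((N × (∀ i, A i)) → Fin M0) =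
        M0 ^ (Fintype.card N * Fintype.card (∀ i, A i)) := by
      rw [Fintype.card_fun, Fintype.card_fin, Fintype.card_prod]
    have hPNcard : ProfNet.card = ∏ i, (Net i).card := by
      rw [hPNdef, Fintype.card_piFinset]
    have hNetpos : ∀ i, 0 < (Net i).card := fun i => Finset.Nonempty.card_pos (hNetNe i)
    have hPNpos : 0 < ProfNet.card := by
      rw [hPNcard]
      exact Finset.prod_pos fun i _ => hNetpos i
    have hCne : C.Nonempty := by
      refine Finset.Nonempty.image ?_ toF
      refine ⟨fun _ => fun i => ((hNetNe i).choose), Fintype.mem_piFinset.2 fun γ => ?_⟩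
      exact Fintype.mem_piFinset.2 fun i => (hNetNe i).choose_spec
    have hCle : C.card ≤ ProfNet.card ^ (M0 ^ (Fintype.card N * Fintype.card (∀ i, A i))) := by
      calc C.card ≤ (Fintype.piFinset
          (fun _ : (N × (∀ i, A i)) → Fin M0 => ProfNet)).card := Finset.card_image_le
      _ = ∏ _γ : (N × (∀ i, A i)) → Fin M0, ProfNet.card := Fintype.card_piFinset _
      _ = ProfNet.card ^ Fintype.card ((N × (∀ i, A i)) → Fin M0) := by
          rw [Finset.prod_const, Finset.card_univ]
      _ = ProfNet.card ^ (M0 ^ (Fintype.card N * Fintype.card (∀ i, A i))) := by rw [hGcard]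
    have hlogPN : Real.log (ProfNet.card : ℝ) = ∑ i, Real.log ((Net i).card : ℝ) := by
      rw [hPNcard, Nat.cast_prod]
      exact Real.log_prod fun i _ => by
        exact_mod_cast Nat.pos_iff_ne_zero.1 (hNetpos i)
    have hClog : Real.log (C.card : ℝ) ≤
        ((M0:ℝ)) ^ (Fintype.card N * Fintype.card (∀ i, A i)) *
          ∑ i, Real.log ((Net i).card : ℝ) := by
      have hCpos : (0:ℝ) < (C.card : ℝ) := by exact_mod_cast Finset.Nonempty.card_pos hCne
      calc Real.log (C.card : ℝ)
          ≤ Real.log ((ProfNet.card : ℝ) ^ (M0 ^ (Fintype.card N * Fintype.card (∀ i, A i)))) := by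
            apply Real.log_le_log hCpos
            exact_mod_cast hCle
      _ = ((M0 ^ (Fintype.card N * Fintype.card (∀ i, A i)) : ℕ) : ℝ) *
            Real.log (ProfNet.card : ℝ) := by
            rw [Real.log_pow]
      _ = ((M0:ℝ)) ^ (Fintype.card N * Fintype.card (∀ i, A i)) *
            ∑ i, Real.log ((Net i).card : ℝ) := by
            rw [Nat.cast_pow, hlogPN]
    refine le_trans hClog ?_
    apply mul_le_mul_of_nonneg_left _ (by positivity)
    exact Finset.sum_le_sum fun i _ => hNetCard i
end
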